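/- arXiv:1607.06326 — 3 statements merged into one kernel-verified Lean document; each statement's English description precedes it below -/
import Mathlib

section
/- (Stora's Lemma, vector-space formulation.) Let E be a real Banach space and ω : E → (E →L[ℝ] ℝ) a continuously differentiable map which is closed, i.e. its derivative is symmetric: for all x, v, w in E, (Dω(x) v)(w) = (Dω(x) w)(v). Let H : ℝ × ℝ → E be twice continuously differentiable, and set F(s) := ∫₀¹ ω(H(s,t))( ∂H/∂t (s,t) ) dt. Then F is differentiable and, for every s, F′(s) = ω(H(s,1))( ∂H/∂s (s,1) ) − ω(H(s,0))( ∂H/∂s (s,0) ); i.e. an infinitesimal deformation of the interpolating family changes the integral only through the variation at the ends of the path. -/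
open MeasureTheory

/-- **Stora's Lemma** (vector-space formulation).  For a `C¹` closed 1-form
`ω` on a real Banach space `E` and a `C²` two-parameter family of paths
`H : ℝ × ℝ → E`, the deformation of `F(s) = ∫₀¹ ω(H(s,t))(∂ₜH(s,t)) dt`
depends only on the variation at the ends of the path. -/
theorem stora_lemma
    (E : Type*) [NormedAddCommGroup E] [NormedSpace ℝ E] [CompleteSpace E]
    (ω : E → (E →L[ℝ] ℝ)) (hω : ContDiff ℝ 1 ω)
    (hclosed : ∀ x v w : E, (fderiv ℝ ω x v) w = (fderiv ℝ ω x w) v)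
    (H : ℝ × ℝ → E) (hH : ContDiff ℝ 2 H) (s : ℝ) :
    HasDerivAt
      (fun s' : ℝ =>
        ∫ t in (0:ℝ)..1, ω (H (s', t)) (fderiv ℝ H (s', t) (0, 1)))
      (ω (H (s, 1)) (fderiv ℝ H (s, 1) (1, 0))
        - ω (H (s, 0)) (fderiv ℝ H (s, 0) (1, 0))) s := by
  have hH1 : ContDiff ℝ 1 H := hH.of_le one_le_two
  have hHc : Continuous H := hH.continuous
  have hDH : ContDiff ℝ 1 (fderiv ℝ H) := hH.fderiv_right le_rfl
  have hDHc : Continuous (fderiv ℝ H) := hDH.continuous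
  have hD2Hc : Continuous (fderiv ℝ (fderiv ℝ H)) := hDH.continuous_fderiv one_ne_zero
  have hωc : Continuous ω := hω.continuous
  have hDωc : Continuous (fderiv ℝ ω) := hω.continuous_fderiv one_ne_zero
  -- The common mixed derivative
  set D : ℝ × ℝ → ℝ := fun p =>
    (fderiv ℝ ω (H p) (fderiv ℝ H p (1, 0))) (fderiv ℝ H p (0, 1))
      + ω (H p) (fderiv ℝ (fderiv ℝ H) p (1, 0) (0, 1)) with hD
  have hDcont : Continuous D := by
    apply Continuous.add
    · exact ((hDωc.comp hHc).clm_apply (hDHc.clm_apply continuous_const)).clm_apply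
        (hDHc.clm_apply continuous_const)
    · exact (hωc.comp hHc).clm_apply ((hD2Hc.clm_apply continuous_const).clm_apply
        continuous_const)
  -- full Fréchet derivatives of g and φ
  have key : ∀ (p : ℝ × ℝ) (v : ℝ × ℝ),
      HasFDerivAt (fun q => ω (H q) (fderiv ℝ H q v))
        ((ω (H p)).comp ((fderiv ℝ (fderiv ℝ H) p).flip v)
          + ((fderiv ℝ ω (H p)).comp (fderiv ℝ H p)).flip (fderiv ℝ H p v)) p := by
    intro p v
    have hc : HasFDerivAt (fun q => ω (H q)) ((fderiv ℝ ω (H p)).comp (fderiv ℝ H p)) p :=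
      ((hω.differentiable one_ne_zero (H p)).hasFDerivAt).comp p
        ((hH1.differentiable one_ne_zero p).hasFDerivAt)
    have hu : HasFDerivAt (fun q => fderiv ℝ H q v)
        ((fderiv ℝ (fderiv ℝ H) p).flip v) p := by
      have := ((hDH.differentiable one_ne_zero p).hasFDerivAt).clm_apply
        (hasFDerivAt_const v p)
      simpa using this
    simpa using hc.clm_apply hu
  -- directional derivative in s
  have keyS : ∀ p : ℝ × ℝ,
      HasDerivAt (fun σ => ω (H (σ, p.2)) (fderiv ℝ H (σ, p.2) (0, 1))) (D p) p.1 := by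
    intro p
    have hcurve : HasDerivAt (fun σ : ℝ => (σ, p.2)) ((1 : ℝ), (0 : ℝ)) p.1 :=
      (hasDerivAt_id p.1).prodMk (hasDerivAt_const p.1 p.2)
    have := (key p (0, 1)).comp_hasDerivAt p.1 (by simpa using hcurve)
    refine HasDerivAt.congr_deriv this ?_
    simp [hD, add_comm]
  -- directional derivative in t of the "φ" function
  have keyT : ∀ p : ℝ × ℝ,
      HasDerivAt (fun τ => ω (H (p.1, τ)) (fderiv ℝ H (p.1, τ) (1, 0))) (D p) p.2 := by
    intro p
    have hcurve : HasDerivAt (fun τ : ℝ => (p.1, τ)) ((0 : ℝ), (1 : ℝ)) p.2 :=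
      (hasDerivAt_const p.2 p.1).prodMk (hasDerivAt_id p.2)
    have := (key p (1, 0)).comp_hasDerivAt p.2 (by simpa using hcurve)
    refine HasDerivAt.congr_deriv this ?_
    have hsymm : fderiv ℝ (fderiv ℝ H) p (1, 0) (0, 1)
        = fderiv ℝ (fderiv ℝ H) p (0, 1) (1, 0) :=
      (hH.contDiffAt.isSymmSndFDerivAt (by simp)) _ _
    simp [hD, hsymm, hclosed (H p) (fderiv ℝ H p (1, 0)) (fderiv ℝ H p (0, 1)), add_comm]
  -- bound on D on a compact neighborhood
  obtain ⟨C, hC⟩ : ∃ C, ∀ p ∈ (Set.Icc (s - 1) (s + 1) ×ˢ Set.Icc (0 : ℝ) 1),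
      ‖D p‖ ≤ C :=
    ((isCompact_Icc.prod isCompact_Icc).exists_bound_of_continuousOn hDcont.continuousOn)
  -- differentiation under the integral
  have main := intervalIntegral.hasDerivAt_integral_of_dominated_loc_of_deriv_le
    (F := fun x t => ω (H (x, t)) (fderiv ℝ H (x, t) (0, 1)))
    (F' := fun x t => D (x, t)) (x₀ := s) (a := (0:ℝ)) (b := 1)
    (bound := fun _ => C) (μ := volume) (Metric.ball_mem_nhds s zero_lt_one)
    (Filter.Eventually.of_forall fun x =>
      (Continuous.aestronglyMeasurable (by
        exact ((hωc.comp (hHc.comp (continuous_const.prodMk continuous_id))).clm_apply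
          (((hDHc.comp (continuous_const.prodMk continuous_id))).clm_apply
            continuous_const))) ))
    (Continuous.intervalIntegrable (by
      exact ((hωc.comp (hHc.comp (continuous_const.prodMk continuous_id))).clm_apply
        (((hDHc.comp (continuous_const.prodMk continuous_id))).clm_apply
          continuous_const))) 0 1)
    ((hDcont.comp (continuous_const.prodMk continuous_id)).aestronglyMeasurable)
    (Filter.Eventually.of_forall fun t ht x hx => by
      apply hC
      constructor
      · have := Metric.mem_ball.mp hx
        rw [Real.dist_eq] at this
        constructor <;> linarith [abs_lt.mp this |>.1, abs_lt.mp this |>.2]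
      · rw [Set.uIoc_of_le (by norm_num : (0:ℝ) ≤ 1)] at ht
        exact ⟨le_of_lt ht.1, ht.2⟩)
    (intervalIntegrable_const)
    (Filter.Eventually.of_forall fun t ht x hx => keyS (x, t))
  -- identify the integral of D with the boundary terms
  have hftc : (∫ t in (0:ℝ)..1, D (s, t))
      = ω (H (s, 1)) (fderiv ℝ H (s, 1) (1, 0))
        - ω (H (s, 0)) (fderiv ℝ H (s, 0) (1, 0)) := by
    have := intervalIntegral.integral_eq_sub_of_hasDerivAt
      (f := fun τ => ω (H (s, τ)) (fderiv ℝ H (s, τ) (1, 0)))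
      (f' := fun τ => D (s, τ)) (a := (0:ℝ)) (b := 1)
      (fun τ _ => keyT (s, τ))
      ((hDcont.comp (continuous_const.prodMk continuous_id)).intervalIntegrable 0 1)
    simpa using this
  have := main.2
  rw [hftc] at this
  exact this
end

section
/- (Stora's Corollary, vector-space formulation.) Let E be a real Banach space and ω : E → (E →L[ℝ] ℝ) a continuously differentiable closed 1-form (Dω(x) symmetric for every x). Let H : ℝ × ℝ → E be twice continuously differentiable with the initial endpoint fixed, H(s,0) = x₀ for all s, and set F(s) := ∫₀¹ ω(H(s,t))( ∂H/∂t (s,t) ) dt. Then F is differentiable and F′(s) = ω(H(s,1))( ∂H/∂s (s,1) ) for every s: the variation of the integrated anomaly along a deformation of the interpolating family that keeps the starting point fixed is the anomaly evaluated at the moving endpoint. -/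
open MeasureTheory

/-- **Stora's Corollary** (vector-space formulation).  If the starting point
of the interpolating family is kept fixed, the variation of the integrated
anomaly is the anomaly evaluated at the moving endpoint. -/
theorem stora_corollary
    (E : Type*) [NormedAddCommGroup E] [NormedSpace ℝ E] [CompleteSpace E]
    (ω : E → (E →L[ℝ] ℝ)) (hω : ContDiff ℝ 1 ω)
    (hclosed : ∀ x v w : E, (fderiv ℝ ω x v) w = (fderiv ℝ ω x w) v)
    (H : ℝ × ℝ → E) (hH : ContDiff ℝ 2 H)
    (x₀ : E) (hfix : ∀ s : ℝ, H (s, 0) = x₀) (s : ℝ) :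
    HasDerivAt
      (fun s' : ℝ =>
        ∫ t in (0:ℝ)..1, ω (H (s', t)) (fderiv ℝ H (s', t) (0, 1)))
      (ω (H (s, 1)) (fderiv ℝ H (s, 1) (1, 0))) s := by
  have hHd : Differentiable ℝ H := hH.differentiable (by norm_num)
  have hH' : ContDiff ℝ 1 (fderiv ℝ H) := hH.fderiv_right (m := 1) (by norm_num)
  have hωd : Differentiable ℝ ω := hω.differentiable (by norm_num)
  set g : ℝ × ℝ → ℝ := fun p => ω (H p) (fderiv ℝ H p (0, 1)) with hg_def
  set h : ℝ × ℝ → ℝ := fun p => ω (H p) (fderiv ℝ H p (1, 0)) with hh_def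
  have hg : ContDiff ℝ 1 g :=
    (hω.comp (hH.of_le one_le_two)).clm_apply (hH'.clm_apply contDiff_const)
  have hh : ContDiff ℝ 1 h :=
    (hω.comp (hH.of_le one_le_two)).clm_apply (hH'.clm_apply contDiff_const)
  -- key pointwise identity
  have key : ∀ p : ℝ × ℝ, fderiv ℝ g p (1, 0) = fderiv ℝ h p (0, 1) := by
    intro p
    have hc : HasFDerivAt (fun q => ω (H q)) ((fderiv ℝ ω (H p)).comp (fderiv ℝ H p)) p :=
      (hωd (H p)).hasFDerivAt.comp p (hHd p).hasFDerivAt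
    have hfd : HasFDerivAt (fderiv ℝ H) (fderiv ℝ (fderiv ℝ H) p) p :=
      (hH'.differentiable (by norm_num) p).hasFDerivAt
    have hgp := hc.clm_apply (hfd.clm_apply (hasFDerivAt_const ((0:ℝ),(1:ℝ)) p))
    have hhp := hc.clm_apply (hfd.clm_apply (hasFDerivAt_const ((1:ℝ),(0:ℝ)) p))
    have hsymm : IsSymmSndFDerivAt ℝ H p := hH.contDiffAt.isSymmSndFDerivAt (by simp)
    rw [hg_def, hh_def, hgp.fderiv, hhp.fderiv]
    simp only [ContinuousLinearMap.add_apply, ContinuousLinearMap.comp_apply,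
      ContinuousLinearMap.flip_apply, ContinuousLinearMap.coe_comp', Function.comp_apply,
      ContinuousLinearMap.zero_apply, map_zero, zero_add]
    rw [hclosed, hsymm (1,0) (0,1)]
  -- continuity of directional derivatives
  have hgc1 : Continuous fun p : ℝ × ℝ => fderiv ℝ g p (1, 0) :=
    ((hg.fderiv_right (m := 0) (by norm_num)).continuous).clm_apply continuous_const
  have hhc1 : Continuous fun p : ℝ × ℝ => fderiv ℝ h p (0, 1) :=
    ((hh.fderiv_right (m := 0) (by norm_num)).continuous).clm_apply continuous_const
  -- bound on a compact rectangle
  obtain ⟨C, hC⟩ := (IsCompact.exists_bound_of_continuousOn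
    ((isCompact_Icc (a := s - 1) (b := s + 1)).prod (isCompact_Icc (a := (0:ℝ)) (b := 1)))
    hgc1.continuousOn)
  -- differentiation under the integral sign
  have main := intervalIntegral.hasDerivAt_integral_of_dominated_loc_of_deriv_le
    (F := fun x t => g (x, t)) (F' := fun x t => fderiv ℝ g (x, t) (1, 0)) (x₀ := s)
    (a := 0) (b := 1) (bound := fun _ => C) (s := Metric.ball s 1) (μ := volume) (Metric.ball_mem_nhds s one_pos)
    (Filter.Eventually.of_forall fun x =>
      (hg.continuous.comp (continuous_const.prodMk continuous_id)).aestronglyMeasurable)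
    ((hg.continuous.comp (continuous_const.prodMk continuous_id)).intervalIntegrable 0 1)
    (hgc1.comp (continuous_const.prodMk continuous_id)).aestronglyMeasurable
    (MeasureTheory.ae_of_all _ fun t ht x hx => by
      rcases Metric.mem_ball.1 hx with hx'
      have hx2 : x ∈ Set.Icc (s - 1) (s + 1) := by
        rw [Real.dist_eq, abs_sub_lt_iff] at hx'
        constructor <;> linarith [hx'.1, hx'.2]
      have ht2 : t ∈ Set.Icc (0:ℝ) 1 := by
        rw [Set.uIoc_of_le (by norm_num : (0:ℝ) ≤ 1)] at ht
        exact ⟨le_of_lt ht.1, ht.2⟩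
      exact hC (x, t) ⟨hx2, ht2⟩)
    (intervalIntegrable_const)
    (MeasureTheory.ae_of_all _ fun t ht x hx => by
      have := (hg.differentiable one_ne_zero (x, t)).hasFDerivAt.comp_hasDerivAt x
        ((hasDerivAt_id x).prodMk (hasDerivAt_const x t))
      exact this)
  -- identify the value of the derivative
  have hzero : fderiv ℝ H (s, 0) (1, 0) = 0 := by
    have h1 : HasDerivAt (fun u : ℝ => H (u, 0)) (fderiv ℝ H (s, 0) (1, 0)) s :=
      (hHd (s, 0)).hasFDerivAt.comp_hasDerivAt s
        ((hasDerivAt_id s).prodMk (hasDerivAt_const s (0:ℝ)))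
    have h2 : HasDerivAt (fun u : ℝ => H (u, 0)) 0 s := by
      have : (fun u : ℝ => H (u, 0)) = fun _ => x₀ := funext fun u => hfix u
      rw [this]; exact hasDerivAt_const s x₀
    exact h1.unique h2
  have hftc : (∫ t in (0:ℝ)..1, fderiv ℝ h (s, t) (0, 1)) = h (s, 1) - h (s, 0) :=
    intervalIntegral.integral_eq_sub_of_hasDerivAt
      (fun t _ =>
        (hh.differentiable (by norm_num) (s, t)).hasFDerivAt.comp_hasDerivAt t
          ((hasDerivAt_const t s).prodMk (hasDerivAt_id t)))
      ((hhc1.comp (continuous_const.prodMk continuous_id)).intervalIntegrable 0 1)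
  have hval : (∫ t in (0:ℝ)..1, fderiv ℝ g (s, t) (1, 0))
      = ω (H (s, 1)) (fderiv ℝ H (s, 1) (1, 0)) := by
    rw [intervalIntegral.integral_congr (g := fun t => fderiv ℝ h (s, t) (0, 1))
      (fun t _ => key (s, t)), hftc]
    simp [hh_def, hzero]
  exact hval ▸ main.2
end

section
/- (Independence of the interpolating family.) Let E be a real Banach space and ω : E → (E →L[ℝ] ℝ) a continuously differentiable closed 1-form (Dω(x) symmetric for every x). Let H : ℝ × ℝ → E be twice continuously differentiable with both endpoints fixed: H(s,0) = x₀ and H(s,1) = x₁ for all s. Then the function F(s) := ∫₀¹ ω(H(s,t))( ∂H/∂t (s,t) ) dt is constant in s; i.e. the integral of a closed 1-form along an interpolating path from x₀ to x₁ is unchanged under smooth deformations of the path with fixed ends. -/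
open MeasureTheory

/-- **Independence of the interpolating family.**  The integral of a closed
`C¹` 1-form along an interpolating path from `x₀` to `x₁` is unchanged under
smooth deformations of the path with fixed ends. -/
theorem integral_of_closed_one_form_independent_of_path
    (E : Type*) [NormedAddCommGroup E] [NormedSpace ℝ E] [CompleteSpace E]
    (ω : E → (E →L[ℝ] ℝ)) (hω : ContDiff ℝ 1 ω)
    (hclosed : ∀ x v w : E, (fderiv ℝ ω x v) w = (fderiv ℝ ω x w) v)
    (H : ℝ × ℝ → E) (hH : ContDiff ℝ 2 H)
    (x₀ x₁ : E) (hfix₀ : ∀ s : ℝ, H (s, 0) = x₀) (hfix₁ : ∀ s : ℝ, H (s, 1) = x₁)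
    (s s' : ℝ) :
    (∫ t in (0:ℝ)..1, ω (H (s, t)) (fderiv ℝ H (s, t) (0, 1)))
      = ∫ t in (0:ℝ)..1, ω (H (s', t)) (fderiv ℝ H (s', t) (0, 1)) := by
  have hH1 : ContDiff ℝ 1 H := hH.of_le one_le_two
  have hHd : Differentiable ℝ H := hH1.differentiable one_ne_zero
  have hD : ContDiff ℝ 1 (fderiv ℝ H) := hH.fderiv_right (m := 1) le_rfl
  have hDd : Differentiable ℝ (fderiv ℝ H) := hD.differentiable one_ne_zero
  have hωd : Differentiable ℝ ω := hω.differentiable one_ne_zero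
  -- the family of functions `p ↦ ω(H p)(∂H/∂w (p))`
  have hfw : ∀ w : ℝ × ℝ, ContDiff ℝ 1 (fun q => ω (H q) (fderiv ℝ H q w)) := fun w =>
    isBoundedBilinearMap_apply.contDiff.comp
      ((hω.comp hH1).prodMk ((ContinuousLinearMap.apply ℝ E w).contDiff.comp hD))
  -- value of the derivative of these functions
  have keyval : ∀ w p z : ℝ × ℝ,
      fderiv ℝ (fun q => ω (H q) (fderiv ℝ H q w)) p z
        = fderiv ℝ ω (H p) (fderiv ℝ H p z) (fderiv ℝ H p w)
          + ω (H p) (fderiv ℝ (fderiv ℝ H) p z w) := by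
    intro w p z
    have key : HasFDerivAt (fun q => ω (H q) (fderiv ℝ H q w))
        ((isBoundedBilinearMap_apply.deriv (ω (H p), fderiv ℝ H p w)).comp
          (((fderiv ℝ ω (H p)).comp (fderiv ℝ H p)).prod
            ((ContinuousLinearMap.apply ℝ E w).comp (fderiv ℝ (fderiv ℝ H) p)))) p :=
      (isBoundedBilinearMap_apply.hasFDerivAt (ω (H p), fderiv ℝ H p w)).comp (f := fun q => (ω (H q), fderiv ℝ H q w)) p
        (((hωd (H p)).hasFDerivAt.comp p (hHd p).hasFDerivAt).prodMk
          (((ContinuousLinearMap.apply ℝ E w).hasFDerivAt).comp p (hDd p).hasFDerivAt))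
    rw [key.fderiv]
    simp [IsBoundedBilinearMap.deriv_apply]
    ring
  -- symmetry: ∂ₛ f = ∂ₜ g
  have hsymm : ∀ p : ℝ × ℝ,
      fderiv ℝ (fun q => ω (H q) (fderiv ℝ H q ((0:ℝ), (1:ℝ)))) p (1, 0)
        = fderiv ℝ (fun q => ω (H q) (fderiv ℝ H q ((1:ℝ), (0:ℝ)))) p (0, 1) := by
    intro p
    rw [keyval, keyval]
    have hschwarz : fderiv ℝ (fderiv ℝ H) p ((1:ℝ), (0:ℝ)) ((0:ℝ), (1:ℝ))
        = fderiv ℝ (fderiv ℝ H) p ((0:ℝ), (1:ℝ)) ((1:ℝ), (0:ℝ)) :=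
      second_derivative_symmetric (fun y => (hHd y).hasFDerivAt) (hDd p).hasFDerivAt _ _
    rw [hschwarz, hclosed]
  -- partial derivatives of H in the s-direction vanish at the endpoints
  have hend : ∀ (σ : ℝ) (τ : ℝ) (y : E), (∀ x : ℝ, H (x, τ) = y) →
      fderiv ℝ H (σ, τ) ((1:ℝ), (0:ℝ)) = 0 := by
    intro σ τ y hy
    have h1 : HasDerivAt (fun x : ℝ => H (x, τ)) (fderiv ℝ H (σ, τ) (1, 0)) σ :=
      (hHd (σ, τ)).hasFDerivAt.comp_hasDerivAt σ
        ((hasDerivAt_id σ).prodMk (hasDerivAt_const σ τ))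
    have h2 : HasDerivAt (fun x : ℝ => H (x, τ)) 0 σ := by
      simp only [hy]; exact hasDerivAt_const σ y
    exact h1.unique h2
  -- hence `g(σ, 0) = g(σ, 1) = 0`, so `∫₀¹ ∂ₜ g = 0`; combined with symmetry:
  have hinner : ∀ σ : ℝ,
      (∫ t in (0:ℝ)..1,
        fderiv ℝ (fun q => ω (H q) (fderiv ℝ H q ((0:ℝ), (1:ℝ)))) (σ, t) (1, 0)) = 0 := by
    intro σ
    have hcongr : ∀ t : ℝ,
        fderiv ℝ (fun q => ω (H q) (fderiv ℝ H q ((0:ℝ), (1:ℝ)))) (σ, t) (1, 0)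
          = fderiv ℝ (fun q => ω (H q) (fderiv ℝ H q ((1:ℝ), (0:ℝ)))) (σ, t) (0, 1) :=
      fun t => hsymm (σ, t)
    simp only [hcongr]
    have hderiv : ∀ t ∈ Set.uIcc (0:ℝ) 1,
        HasDerivAt (fun t : ℝ => ω (H (σ, t)) (fderiv ℝ H (σ, t) ((1:ℝ), (0:ℝ))))
          (fderiv ℝ (fun q => ω (H q) (fderiv ℝ H q ((1:ℝ), (0:ℝ)))) (σ, t) (0, 1)) t := by
      intro t _
      exact (((hfw ((1:ℝ), (0:ℝ))).differentiable one_ne_zero (σ, t)).hasFDerivAt).comp_hasDerivAt t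
        ((hasDerivAt_const t σ).prodMk (hasDerivAt_id t))
    have hcont : Continuous fun t : ℝ =>
        fderiv ℝ (fun q => ω (H q) (fderiv ℝ H q ((1:ℝ), (0:ℝ)))) (σ, t) (0, 1) :=
      ((ContinuousLinearMap.apply ℝ ℝ ((0:ℝ), (1:ℝ))).continuous.comp
        ((hfw ((1:ℝ), (0:ℝ))).continuous_fderiv one_ne_zero)).comp
        (continuous_const.prodMk continuous_id)
    have hint : IntervalIntegrable (fun t : ℝ =>
        fderiv ℝ (fun q => ω (H q) (fderiv ℝ H q ((1:ℝ), (0:ℝ)))) (σ, t) (0, 1)) volume 0 1 :=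
      hcont.intervalIntegrable 0 1
    rw [intervalIntegral.integral_eq_sub_of_hasDerivAt hderiv hint]
    rw [hend σ 1 x₁ hfix₁, hend σ 0 x₀ hfix₀]
    simp
  -- differentiation under the integral sign: F has derivative 0 everywhere
  have hF : ∀ σ : ℝ, HasDerivAt
      (fun x : ℝ => ∫ t in (0:ℝ)..1, ω (H (x, t)) (fderiv ℝ H (x, t) (0, 1))) 0 σ := by
    intro σ
    have hcont2 : Continuous fun p : ℝ × ℝ =>
        fderiv ℝ (fun q => ω (H q) (fderiv ℝ H q ((0:ℝ), (1:ℝ)))) p (1, 0) :=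
      (ContinuousLinearMap.apply ℝ ℝ ((1:ℝ), (0:ℝ))).continuous.comp
        ((hfw ((0:ℝ), (1:ℝ))).continuous_fderiv one_ne_zero)
    obtain ⟨C, hC⟩ := (isCompact_Icc (a := ((σ - 1 : ℝ), (0:ℝ))) (b := ((σ + 1 : ℝ), 1))
      ).exists_bound_of_continuousOn hcont2.continuousOn
    have main := intervalIntegral.hasDerivAt_integral_of_dominated_loc_of_deriv_le
      (F := fun x t => ω (H (x, t)) (fderiv ℝ H (x, t) ((0:ℝ), (1:ℝ))))
      (F' := fun x t =>
        fderiv ℝ (fun q => ω (H q) (fderiv ℝ H q ((0:ℝ), (1:ℝ)))) (x, t) (1, 0))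
      (x₀ := σ) (a := (0:ℝ)) (b := 1) (bound := fun _ => C) (μ := volume)
      (s := Metric.ball σ 1) (Metric.ball_mem_nhds σ one_pos)
      (Filter.Eventually.of_forall fun x =>
        (((hfw ((0:ℝ), (1:ℝ))).continuous.comp
          (continuous_const.prodMk continuous_id)).aestronglyMeasurable))
      (((hfw ((0:ℝ), (1:ℝ))).continuous.comp
        (continuous_const.prodMk continuous_id)).intervalIntegrable 0 1)
      ((hcont2.comp (continuous_const.prodMk continuous_id)).aestronglyMeasurable)
      ?_ intervalIntegrable_const ?_
    · have := main.2
      rwa [hinner σ] at this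
    · refine Filter.Eventually.of_forall fun t ht x hx => ?_
      refine hC (x, t) ?_
      rw [Set.uIoc_of_le (by norm_num : (0:ℝ) ≤ 1)] at ht
      rw [Metric.mem_ball, Real.dist_eq, abs_lt] at hx
      simp only [Set.mem_Icc, Prod.mk_le_mk]
      exact ⟨⟨by linarith [hx.1], ht.1.le⟩, ⟨by linarith [hx.2], ht.2⟩⟩
    · refine Filter.Eventually.of_forall fun t ht x hx => ?_
      exact (((hfw ((0:ℝ), (1:ℝ))).differentiable one_ne_zero (x, t)).hasFDerivAt).comp_hasDerivAt x
        ((hasDerivAt_id x).prodMk (hasDerivAt_const x t))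
  -- a function with vanishing derivative is constant
  exact is_const_of_deriv_eq_zero (fun x => (hF x).differentiableAt)
    (fun x => (hF x).deriv) s s'
end
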